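/- Let G be a finite group, C ⊆ G \ {e} an ad-stable subset, and K(a,b) = |Z(ab) ∩ C| the Killing form. If there exist b, b' ∈ C and a nontrivial central element c ∈ Z(G) with b = b'c, then the matrix K has two equal columns (indexed by b and b'), hence is degenerate. -/

import Mathlib

/-- If `b = b'·c` with `c` a nontrivial central element and `b, b' ∈ C`, then the
Killing form matrix `K(a,b) = |Z(ab) ∩ C|` has two equal columns (indexed by `b`
and `b'`), hence is degenerate. -/
theorem stmt_4 {G : Type*} [Group G] [Fintype G] [DecidableEq G]
    (C : Finset G) (h1 : (1 : G) ∉ C)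
    (had : ∀ g a : G, a ∈ C → g * a * g⁻¹ ∈ C)
    (b b' : C) (c : G) (hc : c ∈ Subgroup.center G) (hc1 : c ≠ 1)
    (hbb' : (b : G) = (b' : G) * c) :
    b ≠ b' ∧
    (∀ a ∈ C, (C.filter fun h => h * (a * b) = (a * b) * h).card
      = (C.filter fun h => h * (a * b') = (a * b') * h).card) ∧
    Matrix.det (Matrix.of fun a b : C =>
      ((C.filter fun h => h * ((a : G) * b) = ((a : G) * b) * h).card : ℝ)) = 0 := by
  have hcc : ∀ x : G, c * x = x * c := fun x =>
    (Subgroup.mem_center_iff.mp hc x).symm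
  have hne : b ≠ b' := by
    intro h
    rw [h] at hbb'
    exact hc1 (left_eq_mul.mp hbb')
  have hfilter : ∀ a : G, (C.filter fun h => h * (a * b) = (a * b) * h)
      = (C.filter fun h => h * (a * b') = (a * b') * h) := by
    intro a
    apply Finset.filter_congr
    intro h _
    rw [hbb']
    have l : h * (a * ((b' : G) * c)) = (h * (a * (b' : G))) * c := by
      simp [mul_assoc]
    have r : a * ((b' : G) * c) * h = (a * (b' : G) * h) * c := by
      rw [← mul_assoc a, mul_assoc _ c h, hcc h, ← mul_assoc]
    rw [l, r, mul_left_inj]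
  refine ⟨hne, fun a _ => by rw [hfilter a], ?_⟩
  exact Matrix.det_zero_of_column_eq hne (fun a => by
    simp only [Matrix.of_apply]
    rw [hfilter (a : G)])
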